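/- arXiv:0911.1164 — 3 statements merged into one kernel-verified Lean document; each statement's English description precedes it below -/
import Mathlib

section
/- If a Markov kernel P on a measurable space satisfies the drift condition P V ≤ λ V + b for a measurable function V : X → [1,∞), constants λ ∈ (0,1) and b ∈ (0,∞), and if π is an invariant probability measure for P, then π(V) ≤ b/(1-λ); in particular π(V) < ∞. -/
open MeasureTheory ProbabilityTheory ENNReal

noncomputable def iterP {X : Type*} [MeasurableSpace X] (P : Kernel X X)
    (f : X → ℝ≥0∞) : ℕ → X → ℝ≥0∞
  | 0 => f
  | k + 1 => fun x => ∫⁻ y, iterP P f k y ∂(P x)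

lemma iterP_measurable {X : Type*} [MeasurableSpace X] (P : Kernel X X)
    [IsMarkovKernel P] {f : X → ℝ≥0∞} (hf : Measurable f) :
    ∀ k, Measurable (iterP P f k)
  | 0 => hf
  | k + 1 => (iterP_measurable P hf k).lintegral_kernel

lemma iterP_lintegral {X : Type*} [MeasurableSpace X] (P : Kernel X X)
    [IsMarkovKernel P] {f : X → ℝ≥0∞} (hf : Measurable f)
    (π : Measure X) (hinv : π.bind (fun x => P x) = π) :
    ∀ k, ∫⁻ x, iterP P f k x ∂π = ∫⁻ x, f x ∂π
  | 0 => rfl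
  | k + 1 => by
    have h1 : ∫⁻ x, iterP P f k x ∂(π.bind (fun x => P x))
        = ∫⁻ x, ∫⁻ y, iterP P f k y ∂(P x) ∂π :=
      MeasureTheory.Measure.lintegral_bind P.measurable.aemeasurable (iterP_measurable P hf k).aemeasurable
    calc ∫⁻ x, iterP P f (k + 1) x ∂π
        = ∫⁻ x, iterP P f k x ∂(π.bind (fun x => P x)) := h1.symm
      _ = ∫⁻ x, iterP P f k x ∂π := by rw [hinv]
      _ = ∫⁻ x, f x ∂π := iterP_lintegral P hf π hinv k

lemma iterP_mono {X : Type*} [MeasurableSpace X] (P : Kernel X X)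
    {f g : X → ℝ≥0∞} (hfg : ∀ x, f x ≤ g x) :
    ∀ k x, iterP P f k x ≤ iterP P g k x
  | 0, x => hfg x
  | k + 1, x => lintegral_mono fun y => iterP_mono P hfg k y

lemma iterP_le_const {X : Type*} [MeasurableSpace X] (P : Kernel X X)
    [IsMarkovKernel P] {f : X → ℝ≥0∞} {c : ℝ≥0∞} (hfc : ∀ x, f x ≤ c) :
    ∀ k x, iterP P f k x ≤ c
  | 0, x => hfc x
  | k + 1, x => by
    calc ∫⁻ y, iterP P f k y ∂(P x) ≤ ∫⁻ _, c ∂(P x) :=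
          lintegral_mono fun y => iterP_le_const P hfc k y
      _ = c := by simp

lemma iterP_drift {X : Type*} [MeasurableSpace X] (P : Kernel X X)
    [IsMarkovKernel P] {V : X → ℝ≥0∞} (hVmeas : Measurable V)
    {lam b : ℝ≥0∞}
    (hdrift : ∀ x, ∫⁻ y, V y ∂(P x) ≤ lam * V x + b) :
    ∀ k x, iterP P V k x ≤ lam ^ k * V x + b * ∑ i ∈ Finset.range k, lam ^ i
  | 0, x => by simp [iterP]
  | k + 1, x => by
    have ih : ∀ y, iterP P V k y ≤ lam ^ k * V y + b * ∑ i ∈ Finset.range k, lam ^ i :=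
      iterP_drift P hVmeas hdrift k
    calc ∫⁻ y, iterP P V k y ∂(P x)
        ≤ ∫⁻ y, lam ^ k * V y + b * ∑ i ∈ Finset.range k, lam ^ i ∂(P x) :=
          lintegral_mono ih
      _ = lam ^ k * ∫⁻ y, V y ∂(P x) + b * ∑ i ∈ Finset.range k, lam ^ i := by
          rw [lintegral_add_right _ measurable_const, lintegral_const_mul _ hVmeas,
            lintegral_const]
          simp
      _ ≤ lam ^ k * (lam * V x + b) + b * ∑ i ∈ Finset.range k, lam ^ i := by
          gcongr
          exact hdrift x
      _ = lam ^ (k + 1) * V x + b * ∑ i ∈ Finset.range (k + 1), lam ^ i := by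
          rw [Finset.sum_range_succ]
          ring

/-- If a Markov kernel `P` satisfies the drift condition `P V ≤ λ V + b` for a
measurable `V : X → [1,∞)`, `λ ∈ (0,1)`, `b ∈ (0,∞)`, and `π` is an invariant
probability measure for `P`, then `π(V) ≤ b/(1-λ)`; in particular `π(V) < ∞`. -/
theorem stmt0 {X : Type*} [MeasurableSpace X]
    (P : Kernel X X) [IsMarkovKernel P]
    (V : X → ℝ≥0∞) (hVmeas : Measurable V)
    (hV1 : ∀ x, 1 ≤ V x) (hVfin : ∀ x, V x ≠ ⊤)
    (lam b : ℝ≥0∞) (hlam0 : 0 < lam) (hlam1 : lam < 1)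
    (hb0 : 0 < b) (hbfin : b ≠ ⊤)
    (hdrift : ∀ x, ∫⁻ y, V y ∂(P x) ≤ lam * V x + b)
    (π : Measure X) [IsProbabilityMeasure π]
    (hinv : π.bind (fun x => P x) = π) :
    ∫⁻ x, V x ∂π ≤ b / (1 - lam) ∧ ∫⁻ x, V x ∂π < ⊤ := by
  have h1lam : (1 : ℝ≥0∞) - lam ≠ 0 := (tsub_pos_of_lt hlam1).ne'
  set B := b / (1 - lam) with hB
  have hBfin : B < ⊤ := ENNReal.div_lt_top hbfin h1lam
  have hsum : ∀ k, b * ∑ i ∈ Finset.range k, lam ^ i ≤ B := by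
    intro k
    calc b * ∑ i ∈ Finset.range k, lam ^ i ≤ b * ∑' i, lam ^ i := by
          gcongr
          exact ENNReal.sum_le_tsum _
      _ = b * (1 - lam)⁻¹ := by rw [ENNReal.tsum_geometric]
      _ = B := (div_eq_mul_inv b _).symm
  have key : ∀ n : ℕ, ∫⁻ x, V x ⊓ n ∂π ≤ B := by
    intro n
    have hfm : Measurable fun x => V x ⊓ (n : ℝ≥0∞) := hVmeas.min measurable_const
    have hIk : ∀ k, ∫⁻ x, V x ⊓ n ∂π ≤ (∫⁻ x, lam ^ k * V x ⊓ n ∂π) + B := by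
      intro k
      have heq := iterP_lintegral P hfm π hinv k
      have hle : ∀ x, iterP P (fun x => V x ⊓ n) k x ≤ (lam ^ k * V x ⊓ n) + B := by
        intro x
        have h1 : iterP P (fun x => V x ⊓ n) k x ≤ lam ^ k * V x + B :=
          le_trans (iterP_mono P (fun x => inf_le_left) k x)
            (le_trans (iterP_drift P hVmeas hdrift k x) (by gcongr; exact hsum k))
        have h2 : iterP P (fun x => V x ⊓ n) k x ≤ n :=
          iterP_le_const P (fun x => inf_le_right) k x
        rcases le_total (lam ^ k * V x) (n : ℝ≥0∞) with h | h
        · rw [inf_eq_left.mpr h]; exact h1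
        · rw [inf_eq_right.mpr h]; exact le_trans h2 le_self_add
      calc ∫⁻ x, V x ⊓ n ∂π = ∫⁻ x, iterP P (fun x => V x ⊓ n) k x ∂π := heq.symm
        _ ≤ ∫⁻ x, (lam ^ k * V x ⊓ n) + B ∂π := lintegral_mono hle
        _ = (∫⁻ x, lam ^ k * V x ⊓ n ∂π) + B := by
            rw [lintegral_add_right _ measurable_const, lintegral_const, measure_univ, mul_one]
    have htend : Filter.Tendsto (fun k => ∫⁻ x, lam ^ k * V x ⊓ n ∂π)
        Filter.atTop (nhds 0) := by
      have h0 : (0 : ℝ≥0∞) = ∫⁻ _, (0 : ℝ≥0∞) ∂π := by simp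
      rw [h0]
      apply tendsto_lintegral_of_dominated_convergence (fun _ => (n : ℝ≥0∞))
      · intro k; exact (hVmeas.const_mul _).min measurable_const
      · intro k; exact Filter.Eventually.of_forall fun x => inf_le_right
      · simp
      · apply Filter.Eventually.of_forall
        intro x
        have hmul : Filter.Tendsto (fun k => lam ^ k * V x) Filter.atTop (nhds 0) := by
          have := ENNReal.Tendsto.mul_const
            (ENNReal.tendsto_pow_atTop_nhds_zero_of_lt_one hlam1) (Or.inr (hVfin x))
          simpa using this
        exact tendsto_of_tendsto_of_tendsto_of_le_of_le tendsto_const_nhds hmul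
          (fun k => zero_le) (fun k => inf_le_left)
    have htend' : Filter.Tendsto (fun k => (∫⁻ x, lam ^ k * V x ⊓ n ∂π) + B)
        Filter.atTop (nhds B) := by
      have := htend.add (tendsto_const_nhds (x := B))
      simpa using this
    exact ge_of_tendsto' htend' hIk
  have hsup : ∫⁻ x, V x ∂π = ⨆ n : ℕ, ∫⁻ x, V x ⊓ n ∂π := by
    have hpt : ∀ x, ⨆ n : ℕ, V x ⊓ (n : ℝ≥0∞) = V x := by
      intro x
      apply le_antisymm (iSup_le fun n => inf_le_left)
      obtain ⟨m, hm⟩ := ENNReal.exists_nat_gt (hVfin x)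
      calc V x = V x ⊓ (m : ℝ≥0∞) := (inf_eq_left.mpr hm.le).symm
        _ ≤ ⨆ n : ℕ, V x ⊓ (n : ℝ≥0∞) := le_iSup (fun n : ℕ => V x ⊓ (n : ℝ≥0∞)) m
    rw [← lintegral_iSup (fun n => hVmeas.min measurable_const)
      (fun i j hij x => inf_le_inf_left _ (by exact_mod_cast Nat.cast_le.mpr hij))]
    congr 1
    funext x
    exact (hpt x).symm
  constructor
  · rw [hsup]; exact iSup_le key
  · rw [hsup]; exact lt_of_le_of_lt (iSup_le key) hBfin
end

section
/- If assumption A2 holds (D_β(θ_{n−1}, θ_n) ≤ C γ_n V^η(X_n) a.s. with γ_n = O(n^{−α}), α > 1/2, η ∈ [0,1/2)) together with A1, then Σ_{k≥1} k^{−1/2} D_β(θ_k, θ_{k−1}) V^β(X_k) < ∞ almost surely for any β with β + η ≤ 1. -/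
open MeasureTheory ProbabilityTheory Filter ENNReal

/-- The pseudo-metric `D_β(θ,θ') = sup_{|f|_{V^β} ≤ 1} sup_x
`|P_θ f(x) − P_{θ'} f(x)| / V(x)^β`, valued in `ℝ≥0∞`. -/
noncomputable def Dbeta {𝒳 Θ : Type*} [MeasurableSpace 𝒳] (V : 𝒳 → ℝ) (β : ℝ)
    (P : Θ → ProbabilityTheory.Kernel 𝒳 𝒳) (t t' : Θ) : ℝ≥0∞ :=
  ⨆ (f : {f : 𝒳 → ℝ // Measurable f ∧ ∀ y, |f y| ≤ V y ^ β}) (x : 𝒳),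
    ENNReal.ofReal (|∫ y, f.1 y ∂(P t x) - ∫ y, f.1 y ∂(P t' x)| / V x ^ β)

/-- `Dbeta` is symmetric in its two parameter arguments. -/
lemma Dbeta_comm {𝒳 Θ : Type*} [MeasurableSpace 𝒳] (V : 𝒳 → ℝ) (β : ℝ)
    (P : Θ → ProbabilityTheory.Kernel 𝒳 𝒳) (t t' : Θ) :
    Dbeta V β P t t' = Dbeta V β P t' t := by
  unfold Dbeta
  exact iSup_congr fun f => iSup_congr fun x => by rw [abs_sub_comm]

set_option maxHeartbeats 1000000 in
/-- Under A1 and A2 (diminishing adaptation `D_β(θ_{n−1},θ_n) ≤ C γ_n V^η(X_n)` a.s.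
with `γ_n = O(n^{−α})`, `α > 1/2`, `η ∈ [0,1/2)`), one has
`Σ_{k≥1} k^{−1/2} D_β(θ_k,θ_{k−1}) V^β(X_k) < ∞` a.s. for any `β` with `β + η ≤ 1`. -/
theorem stmt9 {𝒳 Θ Ω : Type*} [MeasurableSpace 𝒳] [MeasurableSpace.CountablyGenerated 𝒳]
    [MeasurableSpace Θ] [m0 : MeasurableSpace Ω]
    (μ : Measure Ω) [IsProbabilityMeasure μ]
    (F : Filtration ℕ m0)
    (P : Θ → Kernel 𝒳 𝒳) (hPmarkov : ∀ t, IsMarkovKernel (P t))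
    (π : Measure 𝒳) [IsProbabilityMeasure π]
    (hinv : ∀ t, π.bind (fun x => P t x) = π)
    (Piter : Θ → ℕ → Kernel 𝒳 𝒳)
    (hPiter0 : ∀ t x, Piter t 0 x = Measure.dirac x)
    (hPiterS : ∀ t (n : ℕ) x, Piter t (n+1) x = ((Piter t n) x).bind (fun y => P t y))
    (V : 𝒳 → ℝ) (hVmeas : Measurable V) (hV1 : ∀ x, 1 ≤ V x)
    -- A1: uniform-in-θ geometric ergodicity
    (hA1 : ∀ β' : ℝ, 0 < β' → β' ≤ 1 → ∃ C ρ : ℝ, 0 < C ∧ ρ ∈ Set.Ioo (0:ℝ) 1 ∧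
      ∀ (t : Θ) (n : ℕ) (x : 𝒳) (f : 𝒳 → ℝ), Measurable f → (∀ y, |f y| ≤ V y ^ β') →
        |∫ y, f y ∂(Piter t n x) - ∫ y, f y ∂π| ≤ C * ρ ^ n * V x ^ β')
    -- A1: drift condition
    (lam b : ℝ) (hlam : lam ∈ Set.Ioo (0:ℝ) 1) (hb : 0 < b)
    (hVint : ∀ t x, Integrable V (P t x))
    (hdrift : ∀ t x, ∫ y, V y ∂(P t x) ≤ lam * V x + b)
    -- the adaptive Markov chain
    (Xc : ℕ → Ω → 𝒳) (θc : ℕ → Ω → Θ)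
    (hXadp : ∀ n, Measurable[F n] (Xc n)) (hθadp : ∀ n, Measurable[F n] (θc n))
    (hX0 : Integrable (fun ω => V (Xc 0 ω)) μ)
    (hchain : ∀ (n : ℕ) (f : 𝒳 → ℝ), Measurable f → (∃ K, ∀ x, |f x| ≤ K) →
      (μ[(fun ω => f (Xc (n+1) ω)) | F n]) =ᵐ[μ]
        fun ω => ∫ y, f y ∂(P (θc n ω) (Xc n ω)))
    -- A2: diminishing adaptation
    (η : ℝ) (hη0 : 0 ≤ η) (hηhalf : η < 1/2)
    (γ : ℕ → ℝ) (hγpos : ∀ n, 0 < γ n) (hγmono : ∀ n, γ (n+1) ≤ γ n)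
    (α : ℝ) (hα : 1/2 < α)
    (hγO : ∃ K : ℝ, ∀ n : ℕ, 1 ≤ n → γ n ≤ K * (n : ℝ) ^ (-α))
    (hA2 : ∀ β' : ℝ, 0 ≤ β' → β' ≤ 1 → ∃ C : ℝ, 0 < C ∧ ∀ n : ℕ, ∀ᵐ ω ∂μ,
      Dbeta V β' P (θc n ω) (θc (n+1) ω) ≤
        ENNReal.ofReal (C * γ (n+1) * V (Xc (n+1) ω) ^ η))
    -- the exponent β
    (β : ℝ) (hβ0 : 0 ≤ β) (hβη : β + η ≤ 1) :
    ∀ᵐ ω ∂μ, ∑' k : ℕ,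
      ENNReal.ofReal (((k : ℝ) + 1) ^ (-(1/2) : ℝ)) *
        Dbeta V β P (θc (k+1) ω) (θc k ω) *
          ENNReal.ofReal (V (Xc (k+1) ω) ^ β) < ⊤ := by
  have hlam0 : 0 < lam := hlam.1
  have hlam1 : lam < 1 := hlam.2
  have hXm : ∀ n, Measurable (Xc n) := fun n => (hXadp n).mono (F.le n) le_rfl
  have hVnonneg : ∀ x, (0:ℝ) ≤ V x := fun x => le_trans zero_le_one (hV1 x)
  -- uniform bound on E[V(X_n)]
  set E0 : ℝ := ∫ ω, V (Xc 0 ω) ∂μ with hE0def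
  have hE0nonneg : 0 ≤ E0 := integral_nonneg fun ω => hVnonneg _
  set B : ℝ := E0 + b / (1 - lam) with hBdef
  have hdivnonneg : 0 ≤ b / (1 - lam) := div_nonneg hb.le (by linarith)
  have hBnonneg : 0 ≤ B := by rw [hBdef]; exact add_nonneg hE0nonneg hdivnonneg
  have key : ∀ n, Integrable (fun ω => V (Xc n ω)) μ ∧ ∫ ω, V (Xc n ω) ∂μ ≤ B := by
    intro n
    induction n with
    | zero =>
      refine ⟨hX0, ?_⟩
      rw [hBdef, hE0def]
      exact le_add_of_nonneg_right hdivnonneg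
    | succ n ih =>
      obtain ⟨hInt, hE⟩ := ih
      set En : ℝ := ∫ ω, V (Xc n ω) ∂μ with hEndef
      have hEnnonneg : 0 ≤ En := integral_nonneg fun ω => hVnonneg _
      set c : ℝ := lam * En + b with hcdef
      have hcnonneg : 0 ≤ c := by positivity
      -- truncations
      have hfm_meas : ∀ m : ℕ, Measurable (fun x => min (V x) (m:ℝ)) :=
        fun m => hVmeas.min measurable_const
      have hfm_nonneg : ∀ (m : ℕ) x, (0:ℝ) ≤ min (V x) (m:ℝ) :=
        fun m x => le_min (hVnonneg x) (Nat.cast_nonneg m)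
      have hfm_bd : ∀ (m : ℕ) x, |min (V x) (m:ℝ)| ≤ (m:ℝ) := fun m x => by
        rw [abs_of_nonneg (hfm_nonneg m x)]; exact min_le_right _ _
      have hIntfmX : ∀ m : ℕ, Integrable (fun ω => min (V (Xc (n+1) ω)) (m:ℝ)) μ := by
        intro m
        refine ⟨((hfm_meas m).comp (hXm (n+1))).aestronglyMeasurable,
          HasFiniteIntegral.of_bounded (C := (m:ℝ)) (ae_of_all _ fun ω => ?_)⟩
        simpa [Real.norm_eq_abs] using hfm_bd m (Xc (n+1) ω)
      -- the conditional-expectation bound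
      have hEfm : ∀ m : ℕ, ∫ ω, min (V (Xc (n+1) ω)) (m:ℝ) ∂μ ≤ c := by
        intro m
        have hcond := hchain n (fun x => min (V x) (m:ℝ)) (hfm_meas m) ⟨(m:ℝ), hfm_bd m⟩
        have hcondle : (μ[(fun ω => min (V (Xc (n+1) ω)) (m:ℝ)) | F n]) ≤ᵐ[μ]
            fun ω => lam * V (Xc n ω) + b := by
          filter_upwards [hcond] with ω hω
          rw [hω]
          haveI := hPmarkov (θc n ω)
          have hIntker : Integrable (fun x => min (V x) (m:ℝ)) (P (θc n ω) (Xc n ω)) := by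
            refine ⟨(hfm_meas m).aestronglyMeasurable,
              HasFiniteIntegral.of_bounded (C := (m:ℝ)) (ae_of_all _ fun y => ?_)⟩
            simpa [Real.norm_eq_abs] using hfm_bd m y
          calc ∫ y, min (V y) (m:ℝ) ∂(P (θc n ω) (Xc n ω))
              ≤ ∫ y, V y ∂(P (θc n ω) (Xc n ω)) :=
                integral_mono hIntker (hVint _ _) fun y => min_le_left _ _
            _ ≤ lam * V (Xc n ω) + b := hdrift _ _
        have h1 : ∫ ω, min (V (Xc (n+1) ω)) (m:ℝ) ∂μ =
            ∫ ω, (μ[(fun ω => min (V (Xc (n+1) ω)) (m:ℝ)) | F n]) ω ∂μ :=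
          (integral_condExp (F.le n)).symm
        have h2 : ∫ ω, (μ[(fun ω => min (V (Xc (n+1) ω)) (m:ℝ)) | F n]) ω ∂μ ≤
            ∫ ω, (lam * V (Xc n ω) + b) ∂μ :=
          integral_mono_ae integrable_condExp ((hInt.const_mul lam).add (integrable_const b))
            hcondle
        have h3 : ∫ ω, (lam * V (Xc n ω) + b) ∂μ = c := by
          rw [integral_add (hInt.const_mul lam) (integrable_const b), integral_const_mul,
            integral_const]
          simp [hcdef, hEndef]
        rw [h1]; rw [h3] at h2; exact h2
      -- lintegral via monotone convergence
      have hsup : ∀ ω, (⨆ m : ℕ, ENNReal.ofReal (min (V (Xc (n+1) ω)) (m:ℝ))) =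
          ENNReal.ofReal (V (Xc (n+1) ω)) := by
        intro ω
        refine le_antisymm (iSup_le fun m => ENNReal.ofReal_le_ofReal (min_le_left _ _)) ?_
        refine le_iSup_of_le ⌈V (Xc (n+1) ω)⌉₊ ?_
        rw [min_eq_left (Nat.le_ceil _)]
      have hL : ∫⁻ ω, ENNReal.ofReal (V (Xc (n+1) ω)) ∂μ ≤ ENNReal.ofReal c := by
        have hmeasm : ∀ m : ℕ,
            Measurable (fun ω => ENNReal.ofReal (min (V (Xc (n+1) ω)) (m:ℝ))) :=
          fun m => (((hVmeas.comp (hXm (n+1))).min measurable_const)).ennreal_ofReal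
        have hmono : Monotone (fun (m : ℕ) (ω : Ω) =>
            ENNReal.ofReal (min (V (Xc (n+1) ω)) (m:ℝ))) := fun m m' h ω =>
          ENNReal.ofReal_le_ofReal (min_le_min le_rfl (Nat.cast_le.2 h))
        have heq : ∫⁻ ω, ENNReal.ofReal (V (Xc (n+1) ω)) ∂μ =
            ⨆ m : ℕ, ∫⁻ ω, ENNReal.ofReal (min (V (Xc (n+1) ω)) (m:ℝ)) ∂μ := by
          rw [← lintegral_iSup hmeasm hmono]
          exact lintegral_congr fun ω => (hsup ω).symm
        rw [heq]
        refine iSup_le fun m => ?_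
        rw [← ofReal_integral_eq_lintegral_ofReal (hIntfmX m)
          (ae_of_all _ fun ω => hfm_nonneg m (Xc (n+1) ω))]
        exact ENNReal.ofReal_le_ofReal (hEfm m)
      have hIntnew : Integrable (fun ω => V (Xc (n+1) ω)) μ := by
        refine ⟨(hVmeas.comp (hXm (n+1))).aestronglyMeasurable, ?_⟩
        rw [hasFiniteIntegral_iff_ofReal (ae_of_all _ fun ω => hVnonneg _)]
        exact lt_of_le_of_lt hL ENNReal.ofReal_lt_top
      have hEnew : ∫ ω, V (Xc (n+1) ω) ∂μ ≤ c := by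
        have := ofReal_integral_eq_lintegral_ofReal hIntnew (ae_of_all _ fun ω => hVnonneg _)
        rw [← this] at hL
        exact (ENNReal.ofReal_le_ofReal_iff hcnonneg).1 hL
      refine ⟨hIntnew, hEnew.trans ?_⟩
      have h1lam : 0 < 1 - lam := by linarith
      rw [hcdef, hBdef]
      have hEB : En ≤ E0 + b / (1 - lam) := by rw [← hBdef]; exact hE
      have hfield : lam * (b / (1 - lam)) + b = b / (1 - lam) := by
        field_simp; ring
      nlinarith [mul_le_mul_of_nonneg_left hEB hlam0.le]
  -- lintegral bound
  have hE : ∀ n, ∫⁻ ω, ENNReal.ofReal (V (Xc n ω)) ∂μ ≤ ENNReal.ofReal B := by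
    intro n
    rw [← ofReal_integral_eq_lintegral_ofReal (key n).1 (ae_of_all _ fun ω => hVnonneg _)]
    exact ENNReal.ofReal_le_ofReal (key n).2
  -- set up A2 constants
  obtain ⟨C, hC, hA2'⟩ := hA2 β hβ0 (by linarith)
  obtain ⟨K, hK⟩ := hγO
  have hKpos : 0 < K := by
    have := hK 1 le_rfl
    have h1 : ((1:ℕ):ℝ) ^ (-α) = 1 := by norm_num
    rw [h1, mul_one] at this
    exact lt_of_lt_of_le (hγpos 1) this
  -- the dominating sequence
  set s : ℕ → ℝ := fun k => ((k:ℝ)+1) ^ (-(1/2):ℝ) * (C * γ (k+1)) with hsdef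
  have hs_nonneg : ∀ k, 0 ≤ s k := by
    intro k
    have h1 : (0:ℝ) ≤ ((k:ℝ)+1) ^ (-(1/2):ℝ) := Real.rpow_nonneg (by positivity) _
    exact mul_nonneg h1 (mul_nonneg hC.le (hγpos _).le)
  set g : ℕ → Ω → ℝ≥0∞ := fun k ω => ENNReal.ofReal (s k * V (Xc (k+1) ω)) with hgdef
  have hg_meas : ∀ k, Measurable (g k) := fun k =>
    ((hVmeas.comp (hXm (k+1))).const_mul (s k)).ennreal_ofReal
  -- lintegral of g k
  have hgint : ∀ k, ∫⁻ ω, g k ω ∂μ ≤ ENNReal.ofReal (s k * B) := by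
    intro k
    have h1 : ∀ ω, g k ω = ENNReal.ofReal (s k) * ENNReal.ofReal (V (Xc (k+1) ω)) :=
      fun ω => ENNReal.ofReal_mul (hs_nonneg k)
    calc ∫⁻ ω, g k ω ∂μ
        = ∫⁻ ω, ENNReal.ofReal (s k) * ENNReal.ofReal (V (Xc (k+1) ω)) ∂μ :=
          lintegral_congr h1
      _ = ENNReal.ofReal (s k) * ∫⁻ ω, ENNReal.ofReal (V (Xc (k+1) ω)) ∂μ :=
          lintegral_const_mul _ ((hVmeas.comp (hXm (k+1))).ennreal_ofReal)
      _ ≤ ENNReal.ofReal (s k) * ENNReal.ofReal B := mul_le_mul' le_rfl (hE (k+1))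
      _ = ENNReal.ofReal (s k * B) := (ENNReal.ofReal_mul (hs_nonneg k)).symm
  -- summable dominating series
  set u : ℕ → ℝ := fun k => C * K * (((k:ℝ)+1) ^ (-(1/2) - α)) with hudef
  have hu_nonneg : ∀ k, 0 ≤ u k := by
    intro k
    exact mul_nonneg (mul_nonneg hC.le hKpos.le) (Real.rpow_nonneg (by positivity) _)
  have hsu : ∀ k, s k ≤ u k := by
    intro k
    have hkpos : (0:ℝ) < (k:ℝ) + 1 := by positivity
    have hγb : γ (k+1) ≤ K * ((k:ℝ)+1) ^ (-α) := by
      have := hK (k+1) (Nat.le_add_left 1 k)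
      rwa [Nat.cast_add, Nat.cast_one] at this
    have hrp : ((k:ℝ)+1) ^ (-(1/2):ℝ) * ((k:ℝ)+1) ^ (-α) = ((k:ℝ)+1) ^ (-(1/2) - α) := by
      rw [← Real.rpow_add hkpos]; ring_nf
    have h1 : (0:ℝ) ≤ ((k:ℝ)+1) ^ (-(1/2):ℝ) := Real.rpow_nonneg hkpos.le _
    calc s k = ((k:ℝ)+1) ^ (-(1/2):ℝ) * (C * γ (k+1)) := rfl
      _ ≤ ((k:ℝ)+1) ^ (-(1/2):ℝ) * (C * (K * ((k:ℝ)+1) ^ (-α))) := by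
          refine mul_le_mul_of_nonneg_left ?_ h1
          exact mul_le_mul_of_nonneg_left hγb hC.le
      _ = C * K * (((k:ℝ)+1) ^ (-(1/2):ℝ) * ((k:ℝ)+1) ^ (-α)) := by ring
      _ = u k := by rw [hrp]
  have hu_summable : Summable u := by
    have hr : (-(1/2) - α : ℝ) < -1 := by linarith
    have h1 : Summable (fun n : ℕ => (n:ℝ) ^ (-(1/2) - α : ℝ)) :=
      Real.summable_nat_rpow.2 hr
    have h2 : Summable (fun n : ℕ => ((n + 1 : ℕ) : ℝ) ^ (-(1/2) - α : ℝ)) :=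
      (summable_nat_add_iff 1).2 h1
    have h3 : Summable (fun n : ℕ => ((n:ℝ) + 1) ^ (-(1/2) - α : ℝ)) := by
      refine h2.congr fun n => ?_
      push_cast
      ring_nf
    exact h3.mul_left _
  -- total lintegral finite
  have hGfin : ∫⁻ ω, ∑' k, g k ω ∂μ < ⊤ := by
    rw [lintegral_tsum fun k => (hg_meas k).aemeasurable]
    calc ∑' k, ∫⁻ ω, g k ω ∂μ
        ≤ ∑' k, ENNReal.ofReal (u k * B) := by
          refine ENNReal.tsum_le_tsum fun k => (hgint k).trans ?_
          exact ENNReal.ofReal_le_ofReal (mul_le_mul_of_nonneg_right (hsu k) hBnonneg)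
      _ = ENNReal.ofReal (∑' k, u k * B) := by
          rw [ENNReal.ofReal_tsum_of_nonneg (fun k => mul_nonneg (hu_nonneg k) hBnonneg)
            (hu_summable.mul_right B)]
      _ < ⊤ := ENNReal.ofReal_lt_top
  have hGae : ∀ᵐ ω ∂μ, ∑' k, g k ω < ⊤ :=
    ae_lt_top (Measurable.ennreal_tsum hg_meas) hGfin.ne
  have hA2ae : ∀ᵐ ω ∂μ, ∀ k : ℕ, Dbeta V β P (θc k ω) (θc (k+1) ω) ≤
      ENNReal.ofReal (C * γ (k+1) * V (Xc (k+1) ω) ^ η) := ae_all_iff.2 hA2'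
  filter_upwards [hGae, hA2ae] with ω h1 h2
  refine lt_of_le_of_lt (ENNReal.tsum_le_tsum fun k => ?_) h1
  set x := Xc (k+1) ω with hxdef
  have hVx : (0:ℝ) < V x := lt_of_lt_of_le zero_lt_one (hV1 x)
  have hck : (0:ℝ) ≤ ((k:ℝ)+1) ^ (-(1/2):ℝ) := Real.rpow_nonneg (by positivity) _
  have hreal : ((k:ℝ)+1) ^ (-(1/2):ℝ) * (C * γ (k+1) * V x ^ η) * V x ^ β ≤
      s k * V x := by
    have hpow : V x ^ η * V x ^ β ≤ V x := by
      rw [← Real.rpow_add hVx]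
      calc V x ^ (η + β) ≤ V x ^ (1:ℝ) :=
          Real.rpow_le_rpow_of_exponent_le (hV1 x) (by linarith)
        _ = V x := Real.rpow_one _
    have h2' : ((k:ℝ)+1) ^ (-(1/2):ℝ) * (C * γ (k+1) * V x ^ η) * V x ^ β =
        (((k:ℝ)+1) ^ (-(1/2):ℝ) * (C * γ (k+1))) * (V x ^ η * V x ^ β) := by ring
    rw [h2', hsdef]
    exact mul_le_mul_of_nonneg_left hpow
      (mul_nonneg hck (mul_nonneg hC.le (hγpos _).le))
  calc ENNReal.ofReal (((k:ℝ)+1) ^ (-(1/2):ℝ)) * Dbeta V β P (θc (k+1) ω) (θc k ω) *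
        ENNReal.ofReal (V x ^ β)
      = ENNReal.ofReal (((k:ℝ)+1) ^ (-(1/2):ℝ)) * Dbeta V β P (θc k ω) (θc (k+1) ω) *
        ENNReal.ofReal (V x ^ β) := by rw [Dbeta_comm]
    _ ≤ ENNReal.ofReal (((k:ℝ)+1) ^ (-(1/2):ℝ)) *
          ENNReal.ofReal (C * γ (k+1) * V x ^ η) * ENNReal.ofReal (V x ^ β) :=
        mul_le_mul' (mul_le_mul' le_rfl (h2 k)) le_rfl
    _ = ENNReal.ofReal (((k:ℝ)+1) ^ (-(1/2):ℝ) * (C * γ (k+1) * V x ^ η) * V x ^ β) := by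
        rw [← ENNReal.ofReal_mul hck, ← ENNReal.ofReal_mul (mul_nonneg hck (mul_nonneg (mul_nonneg hC.le (hγpos _).le) (Real.rpow_nonneg hVx.le _)))]
    _ ≤ g k ω := ENNReal.ofReal_le_ofReal hreal
end

section
/- Let P be a Markov kernel with invariant probability π satisfying ‖Pⁿ(x,·) − π‖_{V^β} ≤ C ρⁿ V^β(x) with ρ ∈ (0,1), and let β ∈ (0, 1/2), h ∈ L_{V^β} with π(V) < ∞. Then the series σ²(h) := π(h̄²) + 2 Σ_{j≥1} π(h̄ Pʲ h̄) converges absolutely (where h̄ = h − π(h)), and in fact |π(h̄ Pʲ h̄)| ≤ C ρʲ |h|²_{V^β} π(V^{2β}). -/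
open MeasureTheory ProbabilityTheory

/-- For a geometrically ergodic Markov kernel (in the `V^β` norm, `β ∈ (0,1/2)`)
with invariant probability `π`, `π(V) < ∞`, and `h ∈ L_{V^β}`, the series
`σ²(h) = π(h̄²) + 2 Σ_{j≥1} π(h̄ Pʲ h̄)` converges absolutely (`h̄ = h − π(h)`),
with `|π(h̄ Pʲ h̄)| ≤ C ρʲ |h|²_{V^β} π(V^{2β})`. -/
theorem stmt18 {X : Type*} [MeasurableSpace X]
    (P : Kernel X X) [IsMarkovKernel P]
    (Pn : ℕ → Kernel X X)
    (hPn0 : ∀ x, Pn 0 x = Measure.dirac x)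
    (hPnS : ∀ (n : ℕ) (x : X), Pn (n+1) x = ((Pn n) x).bind (fun y => P y))
    (π : Measure X) [IsProbabilityMeasure π]
    (hinv : π.bind (fun x => P x) = π)
    (V : X → ℝ) (hV1 : ∀ x, 1 ≤ V x) (hVmeas : Measurable V)
    (hπV : Integrable V π)
    (β : ℝ) (hβ0 : 0 < β) (hβhalf : β < 1/2)
    (C ρ : ℝ) (hC : 0 < C) (hρ : ρ ∈ Set.Ioo (0:ℝ) 1)
    (herg : ∀ (n : ℕ) (x : X) (f : X → ℝ), Measurable f → (∀ y, |f y| ≤ V y ^ β) →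
      |∫ y, f y ∂(Pn n x) - ∫ y, f y ∂π| ≤ C * ρ ^ n * V x ^ β)
    (h : X → ℝ) (hmeas : Measurable h)
    (M : ℝ) (hM : 0 ≤ M) (hbound : ∀ x, |h x| ≤ M * V x ^ β) :
    (∀ j : ℕ, 1 ≤ j →
      |∫ x, ((h x - ∫ z, h z ∂π) * ∫ y, (h y - ∫ z, h z ∂π) ∂(Pn j x)) ∂π|
        ≤ C * ρ ^ j * M ^ 2 * ∫ x, V x ^ (2*β) ∂π) ∧
    Summable (fun j : ℕ =>
      |∫ x, ((h x - ∫ z, h z ∂π) * ∫ y, (h y - ∫ z, h z ∂π) ∂(Pn (j+1) x)) ∂π|) := by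
  obtain ⟨hρ0, hρ1⟩ := hρ
  have hVpos : ∀ x, (0:ℝ) < V x := fun x => lt_of_lt_of_le one_pos (hV1 x)
  have hVβpos : ∀ x, (0:ℝ) < V x ^ β := fun x => Real.rpow_pos_of_pos (hVpos x) β
  have hVβleV : ∀ x, V x ^ β ≤ V x := by
    intro x
    calc V x ^ β ≤ V x ^ (1:ℝ) :=
          Real.rpow_le_rpow_of_exponent_le (hV1 x) (by linarith)
      _ = V x := Real.rpow_one _
  have hV2βleV : ∀ x, V x ^ (2*β) ≤ V x := by
    intro x
    calc V x ^ (2*β) ≤ V x ^ (1:ℝ) :=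
          Real.rpow_le_rpow_of_exponent_le (hV1 x) (by linarith)
      _ = V x := Real.rpow_one _
  have hVβmeas : Measurable fun x => V x ^ β :=
    (Real.continuous_rpow_const hβ0.le).measurable.comp hVmeas
  have hV2βmeas : Measurable fun x => V x ^ (2*β) :=
    (Real.continuous_rpow_const (by positivity : (0:ℝ) ≤ 2*β)).measurable.comp hVmeas
  have hintVβ : Integrable (fun x => V x ^ β) π := by
    refine hπV.mono hVβmeas.aestronglyMeasurable (ae_of_all _ fun x => ?_)
    rw [Real.norm_eq_abs, Real.norm_eq_abs, abs_of_pos (hVβpos x), abs_of_pos (hVpos x)]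
    exact hVβleV x
  have hintV2β : Integrable (fun x => V x ^ (2*β)) π := by
    refine hπV.mono hV2βmeas.aestronglyMeasurable (ae_of_all _ fun x => ?_)
    rw [Real.norm_eq_abs, Real.norm_eq_abs,
      abs_of_pos (Real.rpow_pos_of_pos (hVpos x) _), abs_of_pos (hVpos x)]
    exact hV2βleV x
  have hV2βnonneg : (0:ℝ) ≤ ∫ x, V x ^ (2*β) ∂π :=
    integral_nonneg fun x => (Real.rpow_pos_of_pos (hVpos x) _).le
  have hinth : Integrable h π := by
    refine (hπV.const_mul M).mono hmeas.aestronglyMeasurable (ae_of_all _ fun x => ?_)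
    rw [Real.norm_eq_abs, Real.norm_eq_abs]
    calc |h x| ≤ M * V x ^ β := hbound x
      _ ≤ M * V x := mul_le_mul_of_nonneg_left (hVβleV x) hM
      _ ≤ |M * V x| := le_abs_self _
  set c := ∫ z, h z ∂π with hc
  have hinthc : Integrable (fun y => h y - c) π := hinth.sub (integrable_const c)
  -- each Pn j x is a probability measure
  have hprob : ∀ j x, IsProbabilityMeasure (Pn j x) := by
    intro j
    induction j with
    | zero => intro x; rw [hPn0]; infer_instance
    | succ n ih =>
      intro x
      haveI := ih x
      constructor
      rw [hPnS, Measure.bind_apply MeasurableSet.univ P.measurable.aemeasurable]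
      simp [measure_univ]
  have hmarkov : ∀ j, IsMarkovKernel (Pn j) := fun j => ⟨fun x => hprob j x⟩
  -- invariance of π under Pn j
  have hbindinv : ∀ j, π.bind (fun x => Pn j x) = π := by
    intro j
    induction j with
    | zero =>
      simp only [hPn0]
      exact Measure.bind_dirac
    | succ n ih =>
      have hfe : (fun x => Pn (n+1) x) = fun x => ((Pn n x).bind fun y => P y) :=
        funext (hPnS n)
      rw [hfe, ← Measure.bind_bind (Pn n).measurable.aemeasurable P.measurable.aemeasurable, ih, hinv]
  -- measurability of g j
  have hgmeas : ∀ j, Measurable fun x => ∫ y, (h y - c) ∂(Pn j x) := by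
    intro j
    haveI := hmarkov j
    have hf : StronglyMeasurable fun p : X × X => h p.2 - c :=
      ((hmeas.comp measurable_snd).sub measurable_const).stronglyMeasurable
    exact (hf.integral_kernel_prod_right' (κ := Pn j)).measurable
  -- pointwise bound on g j
  have hgbound : ∀ (j : ℕ) (x : X),
      |∫ y, (h y - c) ∂(Pn j x)| ≤ C * ρ ^ j * M * V x ^ β := by
    intro j x
    haveI := hprob j x
    rcases eq_or_lt_of_le hM with hM0 | hMpos
    · have hh0 : ∀ y, h y = 0 := by
        intro y
        have := hbound y
        rw [← hM0, zero_mul] at this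
        exact abs_eq_zero.mp (le_antisymm this (abs_nonneg _))
      have hc0 : c = 0 := by simp [hc, hh0]
      simp [hh0, hc0, ← hM0]
    · by_cases hint : Integrable h (Pn j x)
      · have heq : ∫ y, (h y - c) ∂(Pn j x) = (∫ y, h y ∂(Pn j x)) - c := by
          rw [integral_sub hint (integrable_const c), integral_const]
          simp
        have hkey := herg j x (fun y => M⁻¹ * h y) (measurable_const.mul hmeas)
          (fun y => by
            rw [abs_mul, abs_inv, abs_of_pos hMpos]
            calc M⁻¹ * |h y| ≤ M⁻¹ * (M * V y ^ β) :=
                  mul_le_mul_of_nonneg_left (hbound y) (by positivity)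
              _ = V y ^ β := by field_simp)
        rw [integral_const_mul, integral_const_mul, ← hc, ← mul_sub, abs_mul, abs_inv,
          abs_of_pos hMpos] at hkey
        rw [heq]
        calc |(∫ y, h y ∂(Pn j x)) - c|
            = M * (M⁻¹ * |(∫ y, h y ∂(Pn j x)) - c|) := by
              field_simp
          _ ≤ M * (C * ρ ^ j * V x ^ β) :=
              mul_le_mul_of_nonneg_left hkey hM
          _ = C * ρ ^ j * M * V x ^ β := by ring
      · have hnint : ¬ Integrable (fun y => h y - c) (Pn j x) := by
          intro hI
          apply hint
          have he : (fun y => (h y - c) + c) = h := funext fun y => by ring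
          rw [← he]
          exact hI.add (integrable_const c)
        rw [integral_undef hnint, abs_zero]
        exact mul_nonneg (mul_nonneg (mul_nonneg hC.le (pow_nonneg hρ0.le j)) hM)
          (hVβpos x).le
  -- zero mean of g j
  have hgzero : ∀ j, ∫ x, (∫ y, (h y - c) ∂(Pn j x)) ∂π = 0 := by
    intro j
    haveI := hmarkov j
    have hsnd : (π ⊗ₘ (Pn j)).map Prod.snd = π := by
      ext s hs
      rw [Measure.map_apply measurable_snd hs,
        Measure.compProd_apply (measurable_snd hs)]
      have : ∀ a : X, (Pn j) a (Prod.mk a ⁻¹' (Prod.snd ⁻¹' s)) = (Pn j) a s := by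
        intro a; congr 1
      rw [show (fun a => (Pn j) a (Prod.mk a ⁻¹' (Prod.snd ⁻¹' s))) = fun a => (Pn j) a s
        from funext this]
      rw [← Measure.bind_apply hs (Pn j).measurable.aemeasurable, hbindinv j]
    have hasm : AEStronglyMeasurable (fun y => h y - c) ((π ⊗ₘ (Pn j)).map Prod.snd) :=
      ((hmeas.sub measurable_const).aestronglyMeasurable)
    have hint2 : Integrable (fun y => h y - c) ((π ⊗ₘ (Pn j)).map Prod.snd) := by
      rw [hsnd]; exact hinthc
    have hintsnd : Integrable (fun p : X × X => h p.2 - c) (π ⊗ₘ (Pn j)) :=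
      (integrable_map_measure hasm measurable_snd.aemeasurable).mp hint2
    calc ∫ x, (∫ y, (h y - c) ∂(Pn j x)) ∂π
        = ∫ p, (h p.2 - c) ∂(π ⊗ₘ (Pn j)) := (Measure.integral_compProd hintsnd).symm
      _ = ∫ y, (h y - c) ∂((π ⊗ₘ (Pn j)).map Prod.snd) :=
          (integral_map measurable_snd.aemeasurable hasm).symm
      _ = ∫ y, (h y - c) ∂π := by rw [hsnd]
      _ = 0 := by
          rw [integral_sub hinth (integrable_const c), integral_const]
          simp [hc]
  -- key bound
  have key : ∀ j : ℕ,
      |∫ x, ((h x - c) * ∫ y, (h y - c) ∂(Pn j x)) ∂π|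
        ≤ C * ρ ^ j * M ^ 2 * ∫ x, V x ^ (2*β) ∂π := by
    intro j
    have hintg : Integrable (fun x => ∫ y, (h y - c) ∂(Pn j x)) π := by
      refine (hintVβ.const_mul (C * ρ ^ j * M)).mono
        (hgmeas j).aestronglyMeasurable (ae_of_all _ fun x => ?_)
      rw [Real.norm_eq_abs, Real.norm_eq_abs]
      calc |∫ y, (h y - c) ∂(Pn j x)| ≤ C * ρ ^ j * M * V x ^ β := hgbound j x
        _ ≤ |C * ρ ^ j * M * V x ^ β| := le_abs_self _
    have hinthg : Integrable (fun x => h x * ∫ y, (h y - c) ∂(Pn j x)) π := by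
      refine (hintV2β.const_mul (C * ρ ^ j * M ^ 2)).mono
        (hmeas.mul (hgmeas j)).aestronglyMeasurable (ae_of_all _ fun x => ?_)
      rw [Real.norm_eq_abs, Real.norm_eq_abs, abs_mul]
      calc |h x| * |∫ y, (h y - c) ∂(Pn j x)|
          ≤ (M * V x ^ β) * (C * ρ ^ j * M * V x ^ β) := by
            exact mul_le_mul (hbound x) (hgbound j x) (abs_nonneg _)
              (mul_nonneg hM (hVβpos x).le)
        _ = C * ρ ^ j * M ^ 2 * (V x ^ β * V x ^ β) := by ring
        _ = C * ρ ^ j * M ^ 2 * V x ^ (2*β) := by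
            rw [← Real.rpow_add (hVpos x), two_mul]
        _ ≤ |C * ρ ^ j * M ^ 2 * V x ^ (2*β)| := le_abs_self _
    have hsplit : ∫ x, ((h x - c) * ∫ y, (h y - c) ∂(Pn j x)) ∂π
        = ∫ x, (h x * ∫ y, (h y - c) ∂(Pn j x)) ∂π
          - c * ∫ x, (∫ y, (h y - c) ∂(Pn j x)) ∂π := by
      rw [← integral_const_mul c, ← integral_sub hinthg (hintg.const_mul c)]
      congr 1
      funext x
      ring
    rw [hsplit, hgzero j, mul_zero, sub_zero]
    have habs : |∫ x, (h x * ∫ y, (h y - c) ∂(Pn j x)) ∂π|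
        ≤ ∫ x, C * ρ ^ j * M ^ 2 * V x ^ (2*β) ∂π := by
      rw [← Real.norm_eq_abs]
      refine norm_integral_le_of_norm_le (hintV2β.const_mul _) (ae_of_all _ fun x => ?_)
      rw [Real.norm_eq_abs, abs_mul]
      calc |h x| * |∫ y, (h y - c) ∂(Pn j x)|
          ≤ (M * V x ^ β) * (C * ρ ^ j * M * V x ^ β) := by
            exact mul_le_mul (hbound x) (hgbound j x) (abs_nonneg _)
              (mul_nonneg hM (hVβpos x).le)
        _ = C * ρ ^ j * M ^ 2 * (V x ^ β * V x ^ β) := by ring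
        _ = C * ρ ^ j * M ^ 2 * V x ^ (2*β) := by
            rw [← Real.rpow_add (hVpos x), two_mul]
    calc |∫ x, (h x * ∫ y, (h y - c) ∂(Pn j x)) ∂π|
        ≤ ∫ x, C * ρ ^ j * M ^ 2 * V x ^ (2*β) ∂π := habs
      _ = C * ρ ^ j * M ^ 2 * ∫ x, V x ^ (2*β) ∂π := integral_const_mul _ _
  refine ⟨fun j _ => key j, ?_⟩
  refine Summable.of_nonneg_of_le (fun j => abs_nonneg _)
    (fun j => ?_) (((summable_geometric_of_lt_one hρ0.le hρ1).mul_left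
      (C * ρ * M ^ 2 * ∫ x, V x ^ (2*β) ∂π)))
  calc |∫ x, ((h x - c) * ∫ y, (h y - c) ∂(Pn (j+1) x)) ∂π|
      ≤ C * ρ ^ (j+1) * M ^ 2 * ∫ x, V x ^ (2*β) ∂π := key (j+1)
    _ = C * ρ * M ^ 2 * (∫ x, V x ^ (2*β) ∂π) * ρ ^ j := by ring
end
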